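/- Let char K = 0, h = x∂ acting on K[x,x^{-1}], and set w_{-2} := (h+2)(h−1)x^{-2} and w_{-1} := (h+1)(h−1)x^{-1}. Then w_{-1} and w_{-2} map A = K + ∑_{i≥2} K x^i into itself. -/

import Mathlib

/-- The coordinate ring of the cusp: the subalgebra `A = K + ∑_{i ≥ 2} K xⁱ` of `K[x]`,
i.e. (equivalently) the polynomials whose coefficient of `x` vanishes. -/
def cusp (K : Type*) [Field K] : Subalgebra K (Polynomial K) where
  carrier := {p | p.coeff 1 = 0}
  zero_mem' := by simp
  one_mem' := by simp [Polynomial.coeff_one]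
  add_mem' := by
    intro a b ha hb
    simp only [Set.mem_setOf_eq, Polynomial.coeff_add] at *
    rw [ha, hb, add_zero]
  mul_mem' := by
    intro a b ha hb
    simp only [Set.mem_setOf_eq] at *
    rw [Polynomial.coeff_mul, Finset.Nat.sum_antidiagonal_eq_sum_range_succ_mk]
    simp [Finset.sum_range_succ, ha, hb]
  algebraMap_mem' := by
    intro k
    simp [Polynomial.algebraMap_eq, Polynomial.coeff_C]

/-- `A = K + ∑_{i≥2} K xⁱ` viewed inside the Laurent polynomial ring `K[x,x⁻¹]`. -/
def cuspL (K : Type*) [Field K] : Set (LaurentPolynomial K) :=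
  Polynomial.toLaurent '' (cusp K : Set (Polynomial K))

/-- The `K`-linear operator on `K[x,x⁻¹]` sending `xⁿ ↦ f(n)·x^{n+d}`. -/
noncomputable def shiftScale (K : Type*) [Field K] (f : ℤ → K) (d : ℤ) :
    Module.End K (LaurentPolynomial K) :=
  (Finsupp.lsum K fun n : ℤ =>
    LinearMap.toSpanSingleton K (LaurentPolynomial K) (f n • LaurentPolynomial.T (n + d)))
    ∘ₗ (AddMonoidAlgebra.coeffLinearEquiv (R := K) (S := K) (M := ℤ)).toLinearMap

/-- The operator `h = x·∂` on `K[x,x⁻¹]`, acting by `xⁿ ↦ n·xⁿ`. -/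
noncomputable def hOp (K : Type*) [Field K] : Module.End K (LaurentPolynomial K) :=
  shiftScale K (fun n => (n : K)) 0

/-- Multiplication by `x^d` as a `K`-linear operator on `K[x,x⁻¹]`. -/
noncomputable def xMul (K : Type*) [Field K] (d : ℤ) : Module.End K (LaurentPolynomial K) :=
  LinearMap.mulLeft K (LaurentPolynomial.T d)

open Polynomial in
/-- `P_i(X) = (X-1)·(X+1)(X+2)⋯(X+i-2)·(X+i)`, the polynomial with
`w_{-i} = P_i(h)·x^{-i}`.  (For `i = 2` this is `(X-1)(X+2)`, i.e. `w_{-2} = (h+2)(h-1)x⁻²`.) -/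
noncomputable def Pneg (K : Type*) [Field K] (i : ℕ) : Polynomial K :=
  (X - 1) * (∏ k ∈ Finset.Icc 1 (i - 2), (X + (k : Polynomial K))) * (X + (i : Polynomial K))

open Polynomial in
/-- `Q_i(X) = (X-i-1)·(X-i+1)⋯(X-2)·X`, the polynomial with `xⁱ·w_{-i} = Q_i(h)`. -/
noncomputable def Qneg (K : Type*) [Field K] (i : ℕ) : Polynomial K :=
  (X - ((i : Polynomial K) + 1)) * (∏ k ∈ Finset.Icc 2 (i - 1), (X - (k : Polynomial K))) * X

/-- The element `w_{-i} = (h-1)(h+1)⋯(h+i-2)(h+i)·x^{-i}` of `D(K[x,x⁻¹])`, as an operator. -/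
noncomputable def wneg (K : Type*) [Field K] (i : ℕ) : Module.End K (LaurentPolynomial K) :=
  Polynomial.aeval (hOp K) (Pneg K i) * xMul K (-(i : ℤ))

/-- `w₁ = (h-1)·x`. -/
noncomputable def wone (K : Type*) [Field K] : Module.End K (LaurentPolynomial K) :=
  (hOp K - 1) * xMul K 1

/-- `w₋₁ = (h+1)(h-1)·x⁻¹`. -/
noncomputable def wnegone (K : Type*) [Field K] : Module.End K (LaurentPolynomial K) :=
  (hOp K + 1) * (hOp K - 1) * xMul K (-1)


open Polynomial LaurentPolynomial in
lemma shiftScale_apply_coeff (K : Type*) [Field K] (f : ℤ → K) (d : ℤ)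
    (q : LaurentPolynomial K) (m : ℤ) :
    (shiftScale K f d q).coeff m = f (m - d) * q.coeff (m - d) := by
  rw [shiftScale, LinearMap.comp_apply]
  erw [Finsupp.lsum_apply]
  rw [AddMonoidAlgebra.coeff_finsuppSum, Finsupp.sum_apply]
  have : ∀ n c, (LinearMap.toSpanSingleton K (LaurentPolynomial K)
      (f n • LaurentPolynomial.T (n + d)) c).coeff m
      = if n = m - d then c * f n else 0 := by
    intro n c
    rw [LinearMap.toSpanSingleton_apply]
    rw [AddMonoidAlgebra.coeff_smul_apply, AddMonoidAlgebra.coeff_smul_apply, smul_eq_mul, smul_eq_mul,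
      LaurentPolynomial.T_apply]
    by_cases h : n = m - d
    · subst h
      simp
    · have h2 : ¬ (n + d = m) := by omega
      simp [h, h2]
  simp only [this]
  erw [Finsupp.sum_ite_eq' q.coeff (m - d) (fun n c => c * f n)]
  by_cases h : m - d ∈ q.coeff.support
  · rw [if_pos h, mul_comm]
  · rw [if_neg h]
    rw [Finsupp.notMem_support_iff] at h
    rw [h, mul_zero]

open Polynomial LaurentPolynomial in
lemma hOp_apply_coeff (K : Type*) [Field K] (q : LaurentPolynomial K) (m : ℤ) :
    (hOp K q).coeff m = (m : K) * q.coeff m := by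
  rw [hOp, shiftScale_apply_coeff]; simp

open Polynomial LaurentPolynomial in
lemma xMul_apply_coeff (K : Type*) [Field K] (d : ℤ) (q : LaurentPolynomial K) (m : ℤ) :
    (xMul K d q).coeff m = q.coeff (m - d) := by
  rw [xMul, LinearMap.mulLeft_apply, LaurentPolynomial.T,
    AddMonoidAlgebra.coeff_single_mul_apply, one_mul, neg_add_eq_sub]

open Polynomial LaurentPolynomial in
lemma hOp_pow_apply_coeff (K : Type*) [Field K] (n : ℕ) (q : LaurentPolynomial K) (m : ℤ) :
    ((hOp K ^ n) q).coeff m = (m : K) ^ n * q.coeff m := by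
  induction n with
  | zero => simp
  | succ n ih =>
    rw [pow_succ', Module.End.mul_apply, hOp_apply_coeff, ih, pow_succ]
    ring

open Polynomial LaurentPolynomial in
lemma aeval_hOp_apply_coeff (K : Type*) [Field K] (p : Polynomial K)
    (q : LaurentPolynomial K) (m : ℤ) :
    ((Polynomial.aeval (hOp K) p) q).coeff m = p.eval (m : K) * q.coeff m := by
  induction p using Polynomial.induction_on' with
  | add f g hf hg =>
    rw [map_add, LinearMap.add_apply, AddMonoidAlgebra.coeff_add, Finsupp.add_apply, hf, hg, eval_add, add_mul]
  | monomial n a =>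
    rw [Polynomial.aeval_monomial]
    have : ((algebraMap K (Module.End K (LaurentPolynomial K))) a * hOp K ^ n) q
        = a • ((hOp K ^ n) q) := by
      rw [Module.End.mul_apply, Algebra.algebraMap_eq_smul_one, LinearMap.smul_apply,
        Module.End.one_apply]
    rw [this, AddMonoidAlgebra.coeff_smul_apply, hOp_pow_apply_coeff, eval_monomial, smul_eq_mul]
    ring

open Polynomial LaurentPolynomial in
lemma mem_cuspL_iff (K : Type*) [Field K] (q : LaurentPolynomial K) :
    q ∈ cuspL K ↔ (∀ n : ℤ, n < 0 → q.coeff n = 0) ∧ q.coeff 1 = 0 := by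
  constructor
  · rintro ⟨p, hp, rfl⟩
    have key : ∀ n : ℤ, (Polynomial.toLaurent p).coeff n
        = if 0 ≤ n then p.coeff n.toNat else 0 := by
      intro n
      by_cases h : 0 ≤ n
      · obtain ⟨k, rfl⟩ := Int.eq_ofNat_of_zero_le h
        rw [if_pos h, LaurentPolynomial.coeff_toLaurent]
        erw [Finsupp.mapDomain_apply Nat.cast_injective]
        simp [Polynomial.coeff]
      · rw [if_neg h, LaurentPolynomial.coeff_toLaurent, Finsupp.mapDomain_notin_range]
        rintro ⟨k, rfl⟩
        exact h (Int.ofNat_zero_le k)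
    constructor
    · intro n hn
      rw [key, if_neg (by omega)]
    · rw [key]
      rw [if_pos (by norm_num)]; exact hp
  · rintro ⟨h0, h1⟩
    refine ⟨LaurentPolynomial.trunc q, ?_, ?_⟩
    · show (LaurentPolynomial.trunc q).coeff 1 = 0
      have : (LaurentPolynomial.trunc q).coeff 1 = q.coeff 1 := rfl
      rw [this, h1]
    · apply LaurentPolynomial.ext
      intro n
      rcases lt_or_ge n 0 with h | h
      · rw [h0 n h]
        rw [LaurentPolynomial.coeff_toLaurent, Finsupp.mapDomain_notin_range]
        rintro ⟨k, rfl⟩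
        exact absurd (Int.ofNat_zero_le k) (not_le.mpr h)
      · obtain ⟨k, rfl⟩ := Int.eq_ofNat_of_zero_le h
        rw [LaurentPolynomial.coeff_toLaurent]
        erw [Finsupp.mapDomain_apply Nat.cast_injective]
        rfl

/-- The operators `w₋₂ = (h+2)(h-1)x⁻²` and `w₋₁ = (h+1)(h-1)x⁻¹` map
`A = K + ∑_{i≥2} K xⁱ` into itself. -/
theorem stmt10 (K : Type*) [Field K] [CharZero K] :
    (∀ q ∈ cuspL K, wnegone K q ∈ cuspL K) ∧
    (∀ q ∈ cuspL K, wneg K 2 q ∈ cuspL K) := by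
  constructor
  · intro q hq
    rw [mem_cuspL_iff] at hq ⊢
    obtain ⟨h0, h1⟩ := hq
    have key : ∀ m : ℤ, (wnegone K q).coeff m = ((m : K) + 1) * ((m : K) - 1) * q.coeff (m + 1) := by
      intro m
      have e1 : wnegone K q = (hOp K + 1) ((hOp K - 1) (xMul K (-1) q)) := rfl
      rw [e1, LinearMap.add_apply, Module.End.one_apply, AddMonoidAlgebra.coeff_add, Finsupp.add_apply, hOp_apply_coeff,
        LinearMap.sub_apply, Module.End.one_apply, AddMonoidAlgebra.coeff_sub, Finsupp.sub_apply, hOp_apply_coeff,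
        xMul_apply_coeff]
      have e2 : m - (-1) = m + 1 := by ring
      rw [e2]; ring
    constructor
    · intro n hn
      rw [key]
      rcases eq_or_ne n (-1) with rfl | h
      · norm_num
      · rw [h0 (n + 1) (by omega), mul_zero]
    · rw [key]
      norm_num
  · intro q hq
    rw [mem_cuspL_iff] at hq ⊢
    obtain ⟨h0, h1⟩ := hq
    have hP : ∀ c : K, (Pneg K 2).eval c = (c - 1) * (c + 2) := by
      intro c
      have he : Finset.Icc 1 (2 - 2) = (∅ : Finset ℕ) := by decide
      simp [Pneg, he]
    have key : ∀ m : ℤ, (wneg K 2 q).coeff m = ((m : K) - 1) * ((m : K) + 2) * q.coeff (m + 2) := by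
      intro m
      have e1 : wneg K 2 q = (Polynomial.aeval (hOp K) (Pneg K 2)) (xMul K (-(2 : ℕ) : ℤ) q) :=
        rfl
      rw [e1, aeval_hOp_apply_coeff, xMul_apply_coeff, hP]
      have e2 : m - (-(2 : ℕ) : ℤ) = m + 2 := by push_cast; ring
      rw [e2, mul_assoc]
    constructor
    · intro n hn
      rw [key]
      rcases eq_or_ne n (-2) with rfl | h2
      · norm_num
      · rcases eq_or_ne n (-1) with rfl | h1'
        · norm_num [h1]
        · rw [h0 (n + 2) (by omega), mul_zero]
    · rw [key]
      norm_num
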